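/- Let Q₂ be a quadratic form on ℝ^{2×2}_sym that is positive definite (Q₂(B) > 0 for all B ≠ 0). Then for every U ∈ ℝ^{2×2}_sym, the function (A, M) ↦ ∫_{−1/2}^{1/2} Q₂( 𝟙(t>0)·(1/2)U − (t·A + M) ) dt on ℝ^{2×2}_sym × ℝ^{2×2}_sym has exactly one minimizer, namely (A, M) = ((3/4)U, (1/4)U). (In particular, in the homogeneous case the coupling map 𝔹 of the bending model satisfies 𝔹(U) = (3/4)U.) -/

import Mathlib

open MeasureTheory Matrix Filter Topology

noncomputable section

/-- 2×2 real matrices. -/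
abbrev M2 : Type := Matrix (Fin 2) (Fin 2) ℝ
/-- 3×3 real matrices. -/
abbrev M3 : Type := Matrix (Fin 3) (Fin 3) ℝ

/-- squared Frobenius norm of a 2×2 matrix -/
def frobSq2 (A : M2) : ℝ := ∑ i, ∑ j, (A i j) ^ 2

/-- squared Frobenius norm of a 3×3 matrix -/
def frobSq3 (A : M3) : ℝ := ∑ i, ∑ j, (A i j) ^ 2

/-- symmetric part of a matrix: `sym G = (G + Gᵀ)/2` -/
def symPart (G : M3) : M3 := (1 / 2 : ℝ) • (G + Gᵀ)

/-- `ι A` : the 3×3 matrix with upper-left 2×2 block `A` and zeros elsewhere -/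
def iota (A : M2) : M3 :=
  Matrix.of fun i j =>
    if hi : (i : ℕ) < 2 then (if hj : (j : ℕ) < 2 then A ⟨i, hi⟩ ⟨j, hj⟩ else 0) else 0

/-- `d ⊗ e₃` : the 3×3 matrix whose third column is `d` and whose other entries vanish -/
def tensorE3 (d : Fin 3 → ℝ) : M3 :=
  Matrix.of fun i j => if j = (2 : Fin 3) then d i else 0

/-- the symmetric 2×2 real matrices, as a submodule of `M2` -/
def Sym2M : Submodule ℝ M2 where
  carrier := {A : M2 | A.IsSymm}
  add_mem' := fun ha hb => Matrix.IsSymm.add ha hb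
  zero_mem' := Matrix.isSymm_zero
  smul_mem' := fun c _ ha => Matrix.IsSymm.smul ha c

/-- for a positive definite quadratic form `Q₂` on the symmetric 2×2 matrices,
the function `(A,M) ↦ ∫_{−1/2}^{1/2} Q₂(𝟙(t>0)·(1/2)U − (t·A + M)) dt` has exactly one
minimizer, namely `(A,M) = ((3/4)U, (1/4)U)`. -/
lemma int_quad (α β γ a b : ℝ) :
    ∫ t in a..b, (α*t^2 + β*t + γ) = α*(b^3-a^3)/3 + β*(b^2-a^2)/2 + γ*(b-a) := by
  have H : ∀ t : ℝ, HasDerivAt (fun t => α*t^3/3 + β*t^2/2 + γ*t) (α*t^2 + β*t + γ) t := by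
    intro t
    have h1 := ((hasDerivAt_pow 3 t).const_mul α).div_const 3
    have h2 := ((hasDerivAt_pow 2 t).const_mul β).div_const 2
    have h3 := (hasDerivAt_id t).const_mul γ
    have := (h1.add h2).add h3
    refine this.congr_deriv ?_
    push_cast; ring
  rw [intervalIntegral.integral_eq_sub_of_hasDerivAt (fun t _ => H t)
    ((Continuous.intervalIntegrable (by fun_prop) a b))]
  ring

theorem statement4 (Q2 : Sym2M → ℝ)
    (hquad : ∃ b : Sym2M →ₗ[ℝ] Sym2M →ₗ[ℝ] ℝ, (∀ u v, b u v = b v u) ∧ ∀ v, Q2 v = b v v)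
    (hpos : ∀ B : Sym2M, B ≠ 0 → 0 < Q2 B) (U : Sym2M) :
    let F : Sym2M × Sym2M → ℝ := fun p =>
      ∫ t in Set.Ioo (-(1 : ℝ) / 2) (1 / 2),
        Q2 ((if 0 < t then (1 : ℝ) else 0) • ((1 / 2 : ℝ) • U) - (t • p.1 + p.2))
    (∀ p : Sym2M × Sym2M, F (((3 : ℝ) / 4) • U, ((1 : ℝ) / 4) • U) ≤ F p) ∧
      ∀ p : Sym2M × Sym2M, (∀ q : Sym2M × Sym2M, F p ≤ F q) →
        p = (((3 : ℝ) / 4) • U, ((1 : ℝ) / 4) • U) := by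
  obtain ⟨b, hsym, hQ⟩ := hquad
  intro F
  set c : Sym2M := (1 / 2 : ℝ) • U with hc
  set A₀ : Sym2M := ((3 : ℝ) / 4) • U with hA₀
  set M₀ : Sym2M := ((1 : ℝ) / 4) • U with hM₀
  -- closed form for F
  have key : ∀ A M : Sym2M, F (A, M) =
      (1/2) * b c c + (1/12) * b A A + b M M
        - (1/8) * (b c A + b A c) - (1/2) * (b c M + b M c) := by
    intro A M
    have hpos' : ∀ t ∈ Set.Ioc (0:ℝ) (1/2),
        Q2 ((if 0 < t then (1 : ℝ) else 0) • c - (t • A + M)) =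
          b A A * t^2 + (b A M + b M A - b c A - b A c) * t
            + (b c c - b c M - b M c + b M M) := by
      intro t ht
      rw [if_pos ht.1, one_smul, hQ]
      simp [map_sub, map_add, _root_.map_smul, LinearMap.map_smul, LinearMap.sub_apply, LinearMap.add_apply,
        LinearMap.smul_apply, smul_eq_mul]
      ring
    have hneg' : ∀ t ∈ Set.Ioc (-(1:ℝ)/2) 0,
        Q2 ((if 0 < t then (1 : ℝ) else 0) • c - (t • A + M)) =
          b A A * t^2 + (b A M + b M A) * t + b M M := by
      intro t ht
      rw [if_neg (not_lt.2 ht.2), zero_smul, zero_sub, hQ]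
      simp [map_sub, map_add, _root_.map_smul, LinearMap.map_smul, map_neg, LinearMap.sub_apply, LinearMap.add_apply,
        LinearMap.neg_apply, LinearMap.smul_apply, smul_eq_mul]
      ring
    have hintp : IntegrableOn (fun t : ℝ =>
        b A A * t^2 + (b A M + b M A - b c A - b A c) * t
          + (b c c - b c M - b M c + b M M)) (Set.Ioc (0:ℝ) (1/2)) := by
      exact (Continuous.integrableOn_Ioc (by fun_prop))
    have hintn : IntegrableOn (fun t : ℝ =>
        b A A * t^2 + (b A M + b M A) * t + b M M) (Set.Ioc (-(1:ℝ)/2) 0) := by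
      exact (Continuous.integrableOn_Ioc (by fun_prop))
    have hFp : F (A, M) = ∫ t in Set.Ioc (-(1:ℝ)/2) (1/2),
        Q2 ((if 0 < t then (1 : ℝ) else 0) • c - (t • A + M)) := by
      exact (MeasureTheory.integral_Ioc_eq_integral_Ioo).symm
    rw [hFp]
    have hsplit : Set.Ioc (-(1:ℝ)/2) (1/2) = Set.Ioc (-(1:ℝ)/2) 0 ∪ Set.Ioc (0:ℝ) (1/2) := by
      rw [Set.Ioc_union_Ioc_eq_Ioc (by norm_num) (by norm_num)]
    rw [hsplit, MeasureTheory.setIntegral_union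
      (by rw [Set.Ioc_disjoint_Ioc]; norm_num)
      measurableSet_Ioc
      (hintn.congr_fun (fun t ht => (hneg' t ht).symm) measurableSet_Ioc)
      (hintp.congr_fun (fun t ht => (hpos' t ht).symm) measurableSet_Ioc)]
    rw [MeasureTheory.setIntegral_congr_fun measurableSet_Ioc hneg',
        MeasureTheory.setIntegral_congr_fun measurableSet_Ioc hpos',
        ← intervalIntegral.integral_of_le (by norm_num : (-(1:ℝ)/2) ≤ 0),
        ← intervalIntegral.integral_of_le (by norm_num : (0:ℝ) ≤ 1/2),
        int_quad, int_quad]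
    ring
  -- difference formula
  have diff : ∀ A M : Sym2M, F (A, M) = F (A₀, M₀) + (1/12) * Q2 (A - A₀) + Q2 (M - M₀) := by
    intro A M
    rw [key, key, hQ, hQ, hc, hA₀, hM₀]
    simp only [map_sub, _root_.map_smul, LinearMap.map_smul, LinearMap.sub_apply, LinearMap.smul_apply, smul_eq_mul]
    rw [hsym A U, hsym M U]
    ring
  have hnn : ∀ v : Sym2M, 0 ≤ Q2 v := by
    intro v
    rcases eq_or_ne v 0 with h | h
    · simp [h, hQ]
    · exact (hpos v h).le
  constructor
  · rintro ⟨A, M⟩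
    rw [diff A M]
    have := hnn (A - A₀); have := hnn (M - M₀)
    linarith
  · rintro ⟨A, M⟩ hp
    have h1 := hp (A₀, M₀)
    rw [diff A M] at h1
    have hA : Q2 (A - A₀) = 0 := by
      have := hnn (A - A₀); have := hnn (M - M₀); linarith
    have hM : Q2 (M - M₀) = 0 := by
      have := hnn (A - A₀); have := hnn (M - M₀); linarith
    have hA' : A = A₀ := by
      by_contra h
      exact absurd hA (ne_of_gt (hpos _ (sub_ne_zero.2 h)))
    have hM' : M = M₀ := by
      by_contra h
      exact absurd hM (ne_of_gt (hpos _ (sub_ne_zero.2 h)))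
    simp [hA', hM', hA₀, hM₀]
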